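/- arXiv:2411.09561 — 4 statements merged into one kernel-verified Lean document; each statement's English description precedes it below -/
import Mathlib

section
/- For every choice of the real parameters ζ₁₁, ζ₂₂, ζ₃₃, ζ₁₂, ζ₁₃, ζ₂₃, each component function x ↦ h⁺(x)ᵢⱼ (i,j ∈ {1,...,4}) is harmonic on ℝ⁴∖{0}: ∑_{l=1}^4 ∂_l²(h⁺_{ij})(x) = 0 for all x ≠ 0. -/
open scoped BigOperators

noncomputable section

/-- Partial derivative in the `i`-th coordinate direction. -/
def pd {n : ℕ} (i : Fin n) (f : (Fin n → ℝ) → ℝ) : (Fin n → ℝ) → ℝ :=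
  fun x => fderiv ℝ f x (Pi.single i 1)

/-- The complex structure `I₁` on `ℝ⁴`. -/
def I1 : Matrix (Fin 4) (Fin 4) ℝ :=
  !![0, -1, 0, 0; 1, 0, 0, 0; 0, 0, 0, -1; 0, 0, 1, 0]

/-- The complex structure `I₂` on `ℝ⁴`. -/
def I2 : Matrix (Fin 4) (Fin 4) ℝ :=
  !![0, 0, -1, 0; 0, 0, 0, 1; 1, 0, 0, 0; 0, -1, 0, 0]

/-- The complex structure `I₃ = I₁ I₂` on `ℝ⁴`. -/
def I3 : Matrix (Fin 4) (Fin 4) ℝ := I1 * I2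

/-- `α_J(x) = Jᵀ x`. -/
def alphaVec (J : Matrix (Fin 4) (Fin 4) ℝ) (x : Fin 4 → ℝ) : Fin 4 → ℝ :=
  Matrix.mulVec (Matrix.transpose J) x

/-- The outer product `A_{JK}(x) = α_J(x) · α_K(x)ᵀ`. -/
def Amat (J K : Matrix (Fin 4) (Fin 4) ℝ) (x : Fin 4 → ℝ) : Matrix (Fin 4) (Fin 4) ℝ :=
  Matrix.vecMulVec (alphaVec J x) (alphaVec K x)

/-- The leading term `h⁺` of the expansion of an ALE metric,
`h⁺(x) = −(2/(3 r⁶)) · [ζ₁₁(2A₁₁−A₂₂−A₃₃) + ζ₂₂(2A₂₂−A₁₁−A₃₃) + ζ₃₃(2A₃₃−A₁₁−A₂₂)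
          + ζ₁₂(A₁₂+A₂₁) + ζ₁₃(A₁₃+A₃₁) + ζ₂₃(A₂₃+A₃₂)]`. -/
def hplus (ζ11 ζ22 ζ33 ζ12 ζ13 ζ23 : ℝ) (x : Fin 4 → ℝ) : Matrix (Fin 4) (Fin 4) ℝ :=
  (-(2 / (3 * (∑ i, x i ^ 2) ^ 3))) •
    (ζ11 • ((2 : ℝ) • Amat I1 I1 x - Amat I2 I2 x - Amat I3 I3 x) +
     ζ22 • ((2 : ℝ) • Amat I2 I2 x - Amat I1 I1 x - Amat I3 I3 x) +
     ζ33 • ((2 : ℝ) • Amat I3 I3 x - Amat I1 I1 x - Amat I2 I2 x) +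
     ζ12 • (Amat I1 I2 x + Amat I2 I1 x) +
     ζ13 • (Amat I1 I3 x + Amat I3 I1 x) +
     ζ23 • (Amat I2 I3 x + Amat I3 I2 x))


-- ===== auxiliary development =====

def nsq (y : Fin 4 → ℝ) : ℝ := ∑ i, y i ^ 2

def Qf (M : Matrix (Fin 4) (Fin 4) ℝ) (y : Fin 4 → ℝ) : ℝ :=
  ∑ a, ∑ b, M a b * y a * y b

def ff (M : Matrix (Fin 4) (Fin 4) ℝ) (y : Fin 4 → ℝ) : ℝ :=
  Qf M y * ((nsq y) ^ 3)⁻¹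

def Pf (M : Matrix (Fin 4) (Fin 4) ℝ) (l : Fin 4) (y : Fin 4 → ℝ) : ℝ :=
  (∑ b, (M b l * y b + y b * M l b)) * ((nsq y) ^ 3)⁻¹ - 6 * y l * Qf M y * ((nsq y) ^ 4)⁻¹

lemma hasFDerivAt_nsq (x : Fin 4 → ℝ) :
    HasFDerivAt nsq (∑ i : Fin 4, ((2:ℕ) * x i ^ 1) • ContinuousLinearMap.proj (R := ℝ) (φ := fun _ : Fin 4 => ℝ) i) x := by
  apply HasFDerivAt.fun_sum
  intro i _
  exact (hasDerivAt_pow 2 (x i)).comp_hasFDerivAt x (hasFDerivAt_apply (𝕜 := ℝ) i x)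

lemma hasFDerivAt_Qf (M : Matrix (Fin 4) (Fin 4) ℝ) (x : Fin 4 → ℝ) :
    HasFDerivAt (Qf M)
      (∑ a : Fin 4, ∑ b : Fin 4,
        ((M a b * x a) • ContinuousLinearMap.proj (R := ℝ) (φ := fun _ : Fin 4 => ℝ) b
          + x b • (M a b • ContinuousLinearMap.proj (R := ℝ) (φ := fun _ : Fin 4 => ℝ) a))) x := by
  apply HasFDerivAt.fun_sum
  intro a _
  apply HasFDerivAt.fun_sum
  intro b _
  exact ((hasFDerivAt_apply a x).const_mul (M a b)).mul (hasFDerivAt_apply b x)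

lemma pd_ff (M : Matrix (Fin 4) (Fin 4) ℝ) (l : Fin 4) (x : Fin 4 → ℝ) (hx : nsq x ≠ 0) :
    pd l (ff M) x = Pf M l x := by
  have hs3 := (hasDerivAt_pow 3 (nsq x)).comp_hasFDerivAt x (hasFDerivAt_nsq x)
  have hinv := (hasDerivAt_inv (pow_ne_zero 3 hx)).comp_hasFDerivAt x hs3
  have hf := (hasFDerivAt_Qf M x).mul hinv
  have : pd l (ff M) x = _ := congrFun (congrArg _ (hf.fderiv)) (Pi.single l 1)
  rw [this]
  simp only [ContinuousLinearMap.add_apply, ContinuousLinearMap.smul_apply,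
    ContinuousLinearMap.coe_sum', Finset.sum_apply, ContinuousLinearMap.neg_apply,
    ContinuousLinearMap.proj_apply, Pi.single_apply, smul_eq_mul, mul_ite, mul_one, mul_zero]
  simp only [Finset.sum_add_distrib, Finset.sum_ite_eq', Finset.mem_univ, if_true]
  simp only [Function.comp_apply, Pi.mul_apply, Finset.sum_ite_irrel, Finset.sum_const_zero, Finset.sum_ite_eq', Finset.mem_univ, if_true]
  rw [Pf, Finset.sum_add_distrib]
  field_simp
  ring

lemma pd_Pf (M : Matrix (Fin 4) (Fin 4) ℝ) (l : Fin 4) (x : Fin 4 → ℝ) (hx : nsq x ≠ 0) :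
    pd l (Pf M l) x =
      (2 * M l l) * ((nsq x) ^ 3)⁻¹
        - 12 * x l * (∑ b, (M b l * x b + x b * M l b)) * ((nsq x) ^ 4)⁻¹
        - 6 * Qf M x * ((nsq x) ^ 4)⁻¹
        + 48 * x l ^ 2 * Qf M x * ((nsq x) ^ 5)⁻¹ := by
  have hs := hasFDerivAt_nsq x
  have hinv3 := (hasDerivAt_inv (pow_ne_zero 3 hx)).comp_hasFDerivAt x
    ((hasDerivAt_pow 3 (nsq x)).comp_hasFDerivAt x hs)
  have hinv4 := (hasDerivAt_inv (pow_ne_zero 4 hx)).comp_hasFDerivAt x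
    ((hasDerivAt_pow 4 (nsq x)).comp_hasFDerivAt x hs)
  have hL : HasFDerivAt (fun y : Fin 4 → ℝ => ∑ b, (M b l * y b + y b * M l b))
      (∑ b : Fin 4, (M b l • ContinuousLinearMap.proj (R := ℝ) (φ := fun _ : Fin 4 => ℝ) b
        + M l b • ContinuousLinearMap.proj (R := ℝ) (φ := fun _ : Fin 4 => ℝ) b)) x := by
    apply HasFDerivAt.fun_sum
    intro b _
    exact ((hasFDerivAt_apply b x).const_mul (M b l)).add
      ((hasFDerivAt_apply b x).mul_const (M l b))
  have hterm2 := (((hasFDerivAt_apply l x).const_mul (6:ℝ)).mul (hasFDerivAt_Qf M x)).mul hinv4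
  have hP := (hL.mul hinv3).sub hterm2
  have : pd l (Pf M l) x = _ := congrFun (congrArg _ hP.fderiv) (Pi.single l 1)
  rw [this]
  simp only [ContinuousLinearMap.add_apply, ContinuousLinearMap.smul_apply,
    ContinuousLinearMap.coe_sum', Finset.sum_apply, ContinuousLinearMap.neg_apply,
    ContinuousLinearMap.sub_apply, ContinuousLinearMap.proj_apply, Pi.single_apply,
    smul_eq_mul, mul_ite, mul_one, mul_zero, Function.comp_apply]
  simp only [Finset.sum_add_distrib, Finset.sum_ite_eq', Finset.mem_univ, if_true]
  simp only [Function.comp_apply, Pi.mul_apply, Finset.sum_ite_irrel, Finset.sum_const_zero, Finset.sum_ite_eq', Finset.mem_univ, if_true]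
  field_simp
  ring

lemma continuous_nsq : Continuous nsq := by
  unfold nsq; fun_prop

lemma sum_pd_pd (M : Matrix (Fin 4) (Fin 4) ℝ) (x : Fin 4 → ℝ) (hx : nsq x ≠ 0)
    (htr : ∑ l, M l l = 0) : ∑ l, pd l (pd l (ff M)) x = 0 := by
  have hU : IsOpen {y : Fin 4 → ℝ | nsq y ≠ 0} :=
    isOpen_compl_singleton.preimage continuous_nsq
  have expand : ∀ l : Fin 4, pd l (pd l (ff M)) x =
      (2 * M l l) * ((nsq x) ^ 3)⁻¹
        - 12 * x l * (∑ b, (M b l * x b + x b * M l b)) * ((nsq x) ^ 4)⁻¹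
        - 6 * Qf M x * ((nsq x) ^ 4)⁻¹
        + 48 * x l ^ 2 * Qf M x * ((nsq x) ^ 5)⁻¹ := by
    intro l
    have hev : pd l (ff M) =ᶠ[nhds x] Pf M l := by
      filter_upwards [hU.mem_nhds hx] with y hy using pd_ff M l y hy
    have : pd l (pd l (ff M)) x = pd l (Pf M l) x := by
      show (fderiv ℝ (pd l (ff M)) x) (Pi.single l 1) = (fderiv ℝ (Pf M l) x) (Pi.single l 1)
      rw [hev.fderiv_eq]
    rw [this, pd_Pf M l x hx]
  have key : ∑ l, x l * (∑ b, (M b l * x b + x b * M l b)) = 2 * Qf M x := by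
    calc ∑ l, x l * (∑ b, (M b l * x b + x b * M l b))
        = (∑ l, ∑ b, x l * (M b l * x b)) + ∑ l, ∑ b, x l * (x b * M l b) := by
          simp [Finset.mul_sum, mul_add, Finset.sum_add_distrib]
      _ = (∑ b, ∑ l, x l * (M b l * x b)) + ∑ l, ∑ b, x l * (x b * M l b) := by
          rw [Finset.sum_comm]
      _ = Qf M x + Qf M x := by
          rw [Qf]
          congr 1 <;>
            (apply Finset.sum_congr rfl; intro a _; apply Finset.sum_congr rfl; intro b _; ring)
      _ = 2 * Qf M x := by ring
  have hsum : ∑ l : Fin 4, x l ^ 2 = nsq x := rfl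
  simp only [expand]
  rw [Finset.sum_add_distrib, Finset.sum_sub_distrib, Finset.sum_sub_distrib]
  have e1 : ∑ l : Fin 4, 2 * M l l * ((nsq x) ^ 3)⁻¹ = 0 := by
    rw [← Finset.sum_mul, ← Finset.mul_sum, htr]; ring
  have e2 : ∑ l : Fin 4, 12 * x l * (∑ b, (M b l * x b + x b * M l b)) * ((nsq x) ^ 4)⁻¹
      = 24 * Qf M x * ((nsq x) ^ 4)⁻¹ := by
    rw [← Finset.sum_mul]
    congr 1
    have : ∑ l : Fin 4, 12 * x l * (∑ b, (M b l * x b + x b * M l b))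
        = 12 * ∑ l, x l * (∑ b, (M b l * x b + x b * M l b)) := by
      rw [Finset.mul_sum]; apply Finset.sum_congr rfl; intros; ring
    rw [this, key]; ring
  have e3 : ∑ l : Fin 4, 6 * Qf M x * ((nsq x) ^ 4)⁻¹ = 24 * Qf M x * ((nsq x) ^ 4)⁻¹ := by
    simp; ring
  have e4 : ∑ l : Fin 4, 48 * x l ^ 2 * Qf M x * ((nsq x) ^ 5)⁻¹
      = 48 * Qf M x * ((nsq x) ^ 4)⁻¹ := by
    have : ∑ l : Fin 4, 48 * x l ^ 2 * Qf M x * ((nsq x) ^ 5)⁻¹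
        = 48 * (∑ l : Fin 4, x l ^ 2) * Qf M x * ((nsq x) ^ 5)⁻¹ := by
      rw [Finset.mul_sum, Finset.sum_mul, Finset.sum_mul]
    rw [this, hsum]
    field_simp
  rw [e1, e2, e3, e4]
  ring

def Bm (J K : Matrix (Fin 4) (Fin 4) ℝ) (i j : Fin 4) : Matrix (Fin 4) (Fin 4) ℝ :=
  Matrix.of fun a b => J a i * K b j

lemma Qf_smul (c : ℝ) (M : Matrix (Fin 4) (Fin 4) ℝ) (y : Fin 4 → ℝ) :
    Qf (c • M) y = c * Qf M y := by
  simp [Qf, Finset.mul_sum, Matrix.smul_apply, smul_eq_mul, mul_assoc]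

lemma Qf_add (M N : Matrix (Fin 4) (Fin 4) ℝ) (y : Fin 4 → ℝ) :
    Qf (M + N) y = Qf M y + Qf N y := by
  simp [Qf, Matrix.add_apply, add_mul, Finset.sum_add_distrib]

lemma Qf_sub (M N : Matrix (Fin 4) (Fin 4) ℝ) (y : Fin 4 → ℝ) :
    Qf (M - N) y = Qf M y - Qf N y := by
  simp [Qf, Matrix.sub_apply, sub_mul, Finset.sum_sub_distrib]

lemma Qf_Bm (J K : Matrix (Fin 4) (Fin 4) ℝ) (i j : Fin 4) (y : Fin 4 → ℝ) :
    Qf (Bm J K i j) y = Amat J K y i j := by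
  simp only [Qf, Bm, Matrix.of_apply, Amat, Matrix.vecMulVec_apply, alphaVec,
    Matrix.mulVec, dotProduct, Matrix.transpose_apply]
  rw [Finset.sum_mul_sum]
  apply Finset.sum_congr rfl; intro a _; apply Finset.sum_congr rfl; intro b _; ring

lemma I3_eq : I3 = !![0,0,0,-1; 0,0,-1,0; 0,1,0,0; 1,0,0,0] := by
  show I1 * I2 = _
  ext a b
  fin_cases a <;> fin_cases b <;>
    norm_num [I1, I2, Matrix.mul_apply, Fin.sum_univ_four, Matrix.vecHead, Matrix.vecTail, Matrix.cons_val_two, Matrix.cons_val_three]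

def Mij (ζ11 ζ22 ζ33 ζ12 ζ13 ζ23 : ℝ) (i j : Fin 4) : Matrix (Fin 4) (Fin 4) ℝ :=
  (-(2/3 : ℝ)) • (ζ11 • ((2:ℝ) • Bm I1 I1 i j - Bm I2 I2 i j - Bm I3 I3 i j) +
   ζ22 • ((2:ℝ) • Bm I2 I2 i j - Bm I1 I1 i j - Bm I3 I3 i j) +
   ζ33 • ((2:ℝ) • Bm I3 I3 i j - Bm I1 I1 i j - Bm I2 I2 i j) +
   ζ12 • (Bm I1 I2 i j + Bm I2 I1 i j) +
   ζ13 • (Bm I1 I3 i j + Bm I3 I1 i j) +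
   ζ23 • (Bm I2 I3 i j + Bm I3 I2 i j))

set_option maxHeartbeats 1600000 in
lemma trace_Mij (ζ11 ζ22 ζ33 ζ12 ζ13 ζ23 : ℝ) (i j : Fin 4) :
    ∑ l, Mij ζ11 ζ22 ζ33 ζ12 ζ13 ζ23 i j l l = 0 := by
  simp only [Mij, Matrix.smul_apply, Matrix.add_apply, Matrix.sub_apply, Bm,
    Matrix.of_apply, smul_eq_mul, I3_eq, Fin.sum_univ_four]
  fin_cases i <;> fin_cases j <;>
    norm_num [I1, I2, Matrix.vecHead, Matrix.vecTail, Matrix.cons_val_two, Matrix.cons_val_three] <;> ring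

lemma hplus_eq_ff (ζ11 ζ22 ζ33 ζ12 ζ13 ζ23 : ℝ) (i j : Fin 4) :
    (fun y => hplus ζ11 ζ22 ζ33 ζ12 ζ13 ζ23 y i j) = ff (Mij ζ11 ζ22 ζ33 ζ12 ζ13 ζ23 i j) := by
  funext y
  have hnsq : (∑ i, y i ^ 2) = nsq y := rfl
  simp only [hplus, ff, Mij, hnsq, Qf_smul, Qf_add, Qf_sub, Qf_Bm,
    Matrix.smul_apply, Matrix.add_apply, Matrix.sub_apply, smul_eq_mul]
  rw [div_eq_mul_inv, mul_inv]
  ring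

/-- Each component of `h⁺` is harmonic on `ℝ⁴ ∖ {0}`. -/
theorem hplus_harmonic (ζ11 ζ22 ζ33 ζ12 ζ13 ζ23 : ℝ) (i j : Fin 4)
    (x : Fin 4 → ℝ) (hx : x ≠ 0) :
    ∑ l, pd l (pd l (fun y => hplus ζ11 ζ22 ζ33 ζ12 ζ13 ζ23 y i j)) x = 0 := by
  have hx' : nsq x ≠ 0 := by
    intro h
    apply hx
    funext a
    have h0 : ∀ b ∈ Finset.univ, (0:ℝ) ≤ x b ^ 2 := fun b _ => sq_nonneg _
    have := (Finset.sum_eq_zero_iff_of_nonneg h0).mp h a (Finset.mem_univ a)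
    have := pow_eq_zero_iff (n := 2) (by norm_num) |>.mp this
    simpa using this
  rw [hplus_eq_ff]
  exact sum_pd_pd _ x hx' (trace_Mij ζ11 ζ22 ζ33 ζ12 ζ13 ζ23 i j)
end
end

section
/- The outward flux of the gradient of 1/|x|² through the boundary of the cube [−1,1]⁴ ⊂ ℝ⁴ equals −4π². Concretely, with f(x) = 1/((x¹)²+(x²)²+(x³)²+(x⁴)²), one has ∑_{j=1}^4 ∫_{[−1,1]³} [ (∂_j f)(x)|_{x^j=1} − (∂_j f)(x)|_{x^j=−1} ] dx̂ʲ = −4π², where for each j the integration is over the remaining three coordinates ranging over [−1,1]³. -/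
open scoped BigOperators
open MeasureTheory

noncomputable section

/-- `f(x) = 1/|x|²` on `ℝ⁴`. -/
def invNormSq (x : Fin 4 → ℝ) : ℝ := (∑ i, x i ^ 2)⁻¹

section Aux
open Real Set intervalIntegral
set_option linter.unusedVariables false
set_option linter.unnecessarySeqFocus false



lemma pd_invNormSq (j : Fin 4) (x : Fin 4 → ℝ) (hx : (∑ i, x i ^ 2) ≠ 0) :
    pd j invNormSq x = -(2 * x j) / (∑ i, x i ^ 2) ^ 2 := by
  have hterm : ∀ i : Fin 4, HasFDerivAt (fun x : Fin 4 → ℝ => x i ^ 2)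
      (x i • ContinuousLinearMap.proj (R := ℝ) (φ := fun _ : Fin 4 => ℝ) i + x i • ContinuousLinearMap.proj (R := ℝ) (φ := fun _ : Fin 4 => ℝ) i) x := by
    intro i
    have hp : HasFDerivAt (fun x : Fin 4 → ℝ => x i)
        (ContinuousLinearMap.proj (R := ℝ) (φ := fun _ : Fin 4 => ℝ) i) x :=
      (ContinuousLinearMap.proj (R := ℝ) (φ := fun _ : Fin 4 => ℝ) i).hasFDerivAt
    simpa [pow_two] using hp.fun_mul hp
  have hq : HasFDerivAt (fun x : Fin 4 → ℝ => ∑ i, x i ^ 2)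
      (∑ i : Fin 4, (x i • ContinuousLinearMap.proj (R := ℝ) (φ := fun _ : Fin 4 => ℝ) i + x i • ContinuousLinearMap.proj (R := ℝ) (φ := fun _ : Fin 4 => ℝ) i)) x :=
    HasFDerivAt.fun_sum (fun i _ => hterm i)
  have hinv : HasDerivAt (fun y : ℝ => y⁻¹) (-(((∑ i, x i ^ 2)) ^ 2)⁻¹) (∑ i, x i ^ 2) :=
    hasDerivAt_inv hx
  have h := hinv.comp_hasFDerivAt x hq
  have heq : invNormSq = (fun y : ℝ => y⁻¹) ∘ (fun x : Fin 4 → ℝ => ∑ i, x i ^ 2) := rfl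
  rw [pd, heq, h.fderiv]
  simp [ContinuousLinearMap.sum_apply, Pi.single_apply, Finset.mul_sum, mul_ite, div_eq_mul_inv]
  have hsim : ∀ i : Fin 4, ((∑ k, x k ^ 2) ^ 2)⁻¹ * ((if i = j then x i else 0) + if i = j then x i else 0)
      = if i = j then 2 * x j * ((∑ k, x k ^ 2) ^ 2)⁻¹ else 0 := by
    intro i
    by_cases h : i = j <;> simp [h] <;> ring
  rw [Finset.sum_congr rfl (fun i _ => hsim i), Finset.sum_ite_eq' Finset.univ j]
  simp



lemma sum_insertNth_sq (j : Fin 4) (a : ℝ) (y : Fin 3 → ℝ) :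
    ∑ i, (j.insertNth a y) i ^ 2 = a ^ 2 + ∑ i, y i ^ 2 := by
  have := Fin.sum_univ_succAbove (M := ℝ) (n := 3)
    (fun i : Fin 4 => (Fin.insertNth (α := fun _ : Fin 4 => ℝ) j a y) i ^ 2) j
  simpa using this

/-- ∫_{t>0} 2 t³ exp(-c t²) dt = 1/c², with integrability. -/
lemma integral_aux (c : ℝ) (hc : 0 < c) :
    (∫ t in Ioi (0:ℝ), 2 * t ^ 3 * exp (-(c * t ^ 2))) = (c ^ 2)⁻¹ ∧
    IntegrableOn (fun t : ℝ => 2 * t ^ 3 * exp (-(c * t ^ 2))) (Ioi 0) := by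
  set F : ℝ → ℝ := fun t => -(c * t ^ 2 + 1) * exp (-(c * t ^ 2)) / c ^ 2 with hF
  have hderiv : ∀ t : ℝ, HasDerivAt F (2 * t ^ 3 * exp (-(c * t ^ 2))) t := by
    intro t
    have h1 : HasDerivAt (fun t : ℝ => c * t ^ 2) (c * (2 * t)) t := by
      simpa using ((hasDerivAt_pow 2 t).const_mul c)
    have h2 : HasDerivAt (fun t : ℝ => exp (-(c * t ^ 2))) (exp (-(c * t ^ 2)) * (-(c * (2 * t)))) t :=
      (h1.neg.exp)
    have h3 : HasDerivAt (fun t : ℝ => -(c * t ^ 2 + 1)) (-(c * (2 * t))) t :=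
      ((h1.add_const 1).neg)
    have h4 := (h3.fun_mul h2).div_const (c ^ 2)
    refine h4.congr_deriv ?_
    field_simp
    ring
  have hlim : Filter.Tendsto F Filter.atTop (nhds 0) := by
    have h1 : Filter.Tendsto (fun t : ℝ => c * t ^ 2) Filter.atTop Filter.atTop :=
      (Filter.tendsto_pow_atTop (two_ne_zero)).const_mul_atTop hc
    have h2 : Filter.Tendsto (fun u : ℝ => -(u + 1) * exp (-u) / c ^ 2) Filter.atTop (nhds 0) := by
      have ha : Filter.Tendsto (fun u : ℝ => u * exp (-u)) Filter.atTop (nhds 0) := by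
        simpa using tendsto_pow_mul_exp_neg_atTop_nhds_zero 1
      have hb : Filter.Tendsto (fun u : ℝ => exp (-u)) Filter.atTop (nhds 0) :=
        tendsto_exp_neg_atTop_nhds_zero
      have := (((ha.add hb).neg).div_const (c ^ 2)).congr
        (f₂ := fun u : ℝ => -(u + 1) * exp (-u) / c ^ 2) (fun u => by ring)
      simpa using this
    have hFe : F = (fun u : ℝ => -(u + 1) * exp (-u) / c ^ 2) ∘ (fun t : ℝ => c * t ^ 2) := rfl
    rw [hFe]
    exact h2.comp h1
  have hpos : ∀ t ∈ Ioi (0:ℝ), 0 ≤ 2 * t ^ 3 * exp (-(c * t ^ 2)) := by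
    intro t ht
    have ht' : (0:ℝ) < t := ht
    positivity
  constructor
  · rw [integral_Ioi_of_hasDerivAt_of_nonneg (hderiv 0).continuousAt.continuousWithinAt
      (fun t _ => hderiv t) hpos hlim]
    simp [hF, neg_div, neg_neg]
  · exact integrableOn_Ioi_deriv_of_nonneg (hderiv 0).continuousAt.continuousWithinAt
      (fun t _ => hderiv t) hpos hlim



def Ef (t : ℝ) : ℝ := ∫ s in (0:ℝ)..t, exp (-s ^ 2)

lemma gauss_cont : Continuous fun s : ℝ => exp (-s ^ 2) := by continuity

lemma gauss_intble : IntegrableOn (fun s : ℝ => exp (-s ^ 2)) (Ioi 0) := by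
  have := (integrable_exp_neg_mul_sq (b := (1:ℝ)) one_pos).integrableOn (s := Ioi 0)
  simpa using this

lemma Ef_hasDerivAt (t : ℝ) : HasDerivAt Ef (exp (-t ^ 2)) t := by
  refine intervalIntegral.integral_hasDerivAt_right
    (gauss_cont.intervalIntegrable 0 t)
    (gauss_cont.stronglyMeasurableAtFilter _ _) gauss_cont.continuousAt

lemma Ef_tendsto : Filter.Tendsto Ef Filter.atTop (nhds (sqrt π / 2)) := by
  have h := intervalIntegral_tendsto_integral_Ioi 0 gauss_intble Filter.tendsto_id
  have hval : (∫ s in Ioi (0:ℝ), exp (-s ^ 2)) = sqrt π / 2 := by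
    have := integral_gaussian_Ioi 1
    simpa using this
  rw [hval] at h
  exact h

lemma Ef_nonneg (t : ℝ) (ht : 0 ≤ t) : 0 ≤ Ef t :=
  intervalIntegral.integral_nonneg ht (fun s _ => (exp_nonneg _))

lemma Ef_zero : Ef 0 = 0 := intervalIntegral.integral_same

/-- substitution: for t > 0, ∫_{-1}^1 exp(-t²s²) ds = 2 E(t)/t -/
lemma integral_slice (t : ℝ) (ht : 0 < t) :
    (∫ s in (-1:ℝ)..1, exp (-(t ^ 2 * s ^ 2))) = 2 * Ef t / t := by
  have h1 : (∫ s in (-1:ℝ)..1, exp (-(t ^ 2 * s ^ 2)))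
      = ∫ s in (-1:ℝ)..1, (fun u : ℝ => exp (-u ^ 2)) (t * s) := by
    congr 1
    funext s
    ring_nf
  rw [h1, intervalIntegral.integral_comp_mul_left (fun u : ℝ => exp (-u ^ 2)) ht.ne']
  have h2 : (∫ u in (t * -1)..(t * 1), exp (-u ^ 2)) = 2 * Ef t := by
    have hsplit : (∫ u in (t * -1)..(t * 1), exp (-u ^ 2))
        = (∫ u in (-t)..(0:ℝ), exp (-u ^ 2)) + ∫ u in (0:ℝ)..t, exp (-u ^ 2) := by
      rw [show t * -1 = -t by ring, mul_one,
        ← intervalIntegral.integral_add_adjacent_intervals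
        (gauss_cont.intervalIntegrable (-t) 0) (gauss_cont.intervalIntegrable 0 t)]
    have hneg : (∫ u in (-t)..(0:ℝ), exp (-u ^ 2)) = Ef t := by
      have := intervalIntegral.integral_comp_neg (a := (0:ℝ)) (b := t) (fun u : ℝ => exp (-u ^ 2))
      simp only [neg_zero] at this
      rw [← this]
      simp [Ef]
    rw [hsplit, hneg, Ef]
    ring
  rw [h2, smul_eq_mul]
  field_simp

lemma final_t_integral :
    (∫ t in Ioi (0:ℝ), 16 * exp (-t ^ 2) * Ef t ^ 3) = π ^ 2 / 4 := by
  have hderiv : ∀ t : ℝ, HasDerivAt (fun t => 4 * Ef t ^ 4) (16 * exp (-t ^ 2) * Ef t ^ 3) t := by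
    intro t
    have := ((Ef_hasDerivAt t).fun_pow 4).const_mul 4
    refine this.congr_deriv ?_
    ring
  have hpos : ∀ t ∈ Ioi (0:ℝ), 0 ≤ 16 * exp (-t ^ 2) * Ef t ^ 3 := by
    intro t ht
    have := Ef_nonneg t (le_of_lt ht)
    positivity
  have hlim : Filter.Tendsto (fun t => 4 * Ef t ^ 4) Filter.atTop (nhds (π ^ 2 / 4)) := by
    have hc : Continuous fun u : ℝ => 4 * u ^ 4 := by continuity
    have := (hc.tendsto (sqrt π / 2)).comp Ef_tendsto
    have hval : 4 * (sqrt π / 2) ^ 4 = π ^ 2 / 4 := by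
      have h : sqrt π ^ 2 = π := Real.sq_sqrt pi_pos.le
      have : sqrt π ^ 4 = π ^ 2 := by rw [show (4:ℕ) = 2*2 from rfl, pow_mul, h]
      rw [div_pow, this]
      ring
    rw [← hval]
    exact this
  rw [integral_Ioi_of_hasDerivAt_of_nonneg (hderiv 0).continuousAt.continuousWithinAt
    (fun t _ => hderiv t) hpos hlim, Ef_zero]
  ring

lemma cube_slice (t : ℝ) (ht : 0 < t) :
    (∫ y in Icc (fun _ : Fin 3 => (-1:ℝ)) (fun _ => 1), exp (-(t ^ 2 * ∑ i, y i ^ 2)))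
      = (2 * Ef t / t) ^ 3 := by
  set g : ℝ → ℝ := (Icc (-1:ℝ) 1).indicator (fun s => exp (-(t ^ 2 * s ^ 2))) with hg
  have key : ∀ y : Fin 3 → ℝ,
      (Icc (fun _ : Fin 3 => (-1:ℝ)) (fun _ => 1)).indicator
        (fun y => exp (-(t ^ 2 * ∑ i, y i ^ 2))) y = ∏ i, g (y i) := by
    intro y
    by_cases hy : y ∈ Icc (fun _ : Fin 3 => (-1:ℝ)) (fun _ => 1)
    · rw [Set.indicator_of_mem hy]
      obtain ⟨h1, h2⟩ := hy
      have hmem : ∀ i, y i ∈ Icc (-1:ℝ) 1 := fun i => ⟨h1 i, h2 i⟩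
      simp only [hg]
      rw [Finset.prod_congr rfl (fun i _ => Set.indicator_of_mem (hmem i) _)]
      rw [← Real.exp_sum]
      congr 1
      rw [Finset.mul_sum] at *
      exact (Finset.sum_neg_distrib _).symm
    · rw [Set.indicator_of_notMem hy]
      have : ∃ i, y i ∉ Icc (-1:ℝ) 1 := by
        by_contra h
        push_neg at h
        exact hy ⟨fun i => (h i).1, fun i => (h i).2⟩
      obtain ⟨i, hi⟩ := this
      rw [eq_comm]
      apply Finset.prod_eq_zero (Finset.mem_univ i)
      simp [hg, Set.indicator_of_notMem hi]
  rw [← MeasureTheory.integral_indicator (measurableSet_Icc)]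
  calc (∫ y : Fin 3 → ℝ, (Icc (fun _ : Fin 3 => (-1:ℝ)) (fun _ => 1)).indicator
        (fun y => exp (-(t ^ 2 * ∑ i, y i ^ 2))) y)
      = ∫ y : Fin 3 → ℝ, ∏ i, g (y i) := by
        congr 1; funext y; exact key y
    _ = (∫ s : ℝ, g s) ^ 3 := by
        have := MeasureTheory.integral_fintype_prod_volume_eq_pow (ι := Fin 3) g
        simpa using this
    _ = (2 * Ef t / t) ^ 3 := by
        congr 1
        rw [hg, MeasureTheory.integral_indicator measurableSet_Icc,
          integral_Icc_eq_integral_Ioc, ← intervalIntegral.integral_of_le (by norm_num : (-1:ℝ) ≤ 1)]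
        exact integral_slice t ht




abbrev Box : Set (Fin 3 → ℝ) := Icc (fun _ => (-1:ℝ)) (fun _ => 1)

lemma S_cont : Continuous fun y : Fin 3 → ℝ => ∑ i, y i ^ 2 := by
  exact continuous_finset_sum _ (fun i _ => (continuous_apply i).pow 2)

lemma S_nonneg (y : Fin 3 → ℝ) : 0 ≤ ∑ i, y i ^ 2 :=
  Finset.sum_nonneg (fun i _ => sq_nonneg _)

lemma one_add_S_pos (y : Fin 3 → ℝ) : 0 < 1 + ∑ i, y i ^ 2 := by
  have := S_nonneg y; linarith

lemma cube_integral :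
    (∫ y in Box, ((1 + ∑ i, y i ^ 2) ^ 2)⁻¹) = π ^ 2 / 4 := by
  set f : (Fin 3 → ℝ) × ℝ → ℝ := fun p => 2 * p.2 ^ 3 * exp (-((1 + ∑ i, p.1 i ^ 2) * p.2 ^ 2))
    with hf
  have hfc : Continuous f := by
    apply Continuous.mul
    · exact continuous_const.mul ((continuous_snd).pow 3)
    · exact (((continuous_const.add (S_cont.comp continuous_fst)).mul
        ((continuous_snd).pow 2)).neg).rexp
  set μ : Measure (Fin 3 → ℝ) := volume.restrict Box with hμ
  set ν : Measure ℝ := volume.restrict (Ioi 0) with hν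
  have hint : Integrable (Function.uncurry (fun y t => f (y, t))) (μ.prod ν) := by
    have hfeq : Function.uncurry (fun y t => f (y, t)) = f := rfl
    rw [hfeq, MeasureTheory.integrable_prod_iff (hfc.aestronglyMeasurable)]
    constructor
    · refine Filter.Eventually.of_forall (fun y => ?_)
      exact (integral_aux _ (one_add_S_pos y)).2
    · have heq : ∀ y : Fin 3 → ℝ, (∫ t, ‖f (y, t)‖ ∂ν) = ((1 + ∑ i, y i ^ 2) ^ 2)⁻¹ := by
        intro y
        rw [hν]
        have h1 : (∫ t in Ioi (0:ℝ), ‖f (y, t)‖) = ∫ t in Ioi (0:ℝ), f (y, t) := by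
          apply setIntegral_congr_fun measurableSet_Ioi
          intro t ht
          have ht' : (0:ℝ) < t := ht
          have : 0 ≤ f (y, t) := by
            simp only [hf]
            positivity
          simp [Real.norm_eq_abs, abs_of_nonneg this]
        rw [h1]
        exact (integral_aux _ (one_add_S_pos y)).1
      apply Integrable.congr (g := fun y => (∫ t, ‖f (y, t)‖ ∂ν))
        (f := fun y : Fin 3 → ℝ => ((1 + ∑ i, y i ^ 2) ^ 2)⁻¹)
      · rw [hμ]
        apply ContinuousOn.integrableOn_compact isCompact_Icc
        apply Continuous.continuousOn
        exact ((continuous_const.add S_cont).pow 2).inv₀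
          (fun y => by have := one_add_S_pos y; exact pow_ne_zero _ this.ne')
      · exact Filter.Eventually.of_forall (fun y => (heq y).symm)
  have hswap := MeasureTheory.integral_integral_swap hint
  have lhs_eq : (∫ y in Box, ((1 + ∑ i, y i ^ 2) ^ 2)⁻¹) = ∫ y, ∫ t, f (y, t) ∂ν ∂μ := by
    rw [hμ]
    apply setIntegral_congr_fun measurableSet_Icc
    intro y _
    rw [hν]
    exact ((integral_aux _ (one_add_S_pos y)).1).symm
  rw [lhs_eq, hswap]
  have rhs_eq : (∫ t, ∫ y, f (y, t) ∂μ ∂ν) = ∫ t in Ioi (0:ℝ), 16 * exp (-t ^ 2) * Ef t ^ 3 := by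
    rw [hν]
    apply setIntegral_congr_fun measurableSet_Ioi
    intro t ht
    have ht' : (0:ℝ) < t := ht
    have hsplit : ∀ y : Fin 3 → ℝ, f (y, t)
        = (2 * t ^ 3 * exp (-t ^ 2)) * exp (-(t ^ 2 * ∑ i, y i ^ 2)) := by
      intro y
      simp only [hf]
      have hexp : exp (-((1 + ∑ i, y i ^ 2) * t ^ 2))
          = exp (-t ^ 2) * exp (-(t ^ 2 * ∑ i, y i ^ 2)) := by
        rw [← Real.exp_add]; congr 1; ring
      rw [hexp]; ring
    calc (∫ y, f (y, t) ∂μ) = ∫ y in Box, (2 * t ^ 3 * exp (-t ^ 2)) * exp (-(t ^ 2 * ∑ i, y i ^ 2)) := by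
          rw [hμ]; exact integral_congr_ae (Filter.Eventually.of_forall (fun y => hsplit y))
      _ = (2 * t ^ 3 * exp (-t ^ 2)) * ∫ y in Box, exp (-(t ^ 2 * ∑ i, y i ^ 2)) := by
          rw [MeasureTheory.integral_const_mul]
      _ = (2 * t ^ 3 * exp (-t ^ 2)) * (2 * Ef t / t) ^ 3 := by rw [cube_slice t ht']
      _ = 16 * exp (-t ^ 2) * Ef t ^ 3 := by field_simp; ring
  rw [rhs_eq, final_t_integral]

end Aux

open Real Set in
/-- The outward flux of `∇(1/|x|²)` through the boundary of the cube `[−1,1]⁴ ⊂ ℝ⁴`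
equals `−4π²`. -/
theorem flux_grad_inv_normSq_cube :
    ∑ j : Fin 4,
      (∫ y in Set.Icc (fun _ : Fin 3 => (-1 : ℝ)) (fun _ => 1),
        (pd j invNormSq (j.insertNth 1 y) - pd j invNormSq (j.insertNth (-1) y)))
      = -4 * Real.pi ^ 2 := by
  have hpt : ∀ (j : Fin 4) (y : Fin 3 → ℝ),
      pd j invNormSq (j.insertNth 1 y) - pd j invNormSq (j.insertNth (-1) y)
      = -4 * ((1 + ∑ i, y i ^ 2) ^ 2)⁻¹ := by
    intro j y
    have hs := S_nonneg y
    have h1 := sum_insertNth_sq j 1 y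
    have h2 := sum_insertNth_sq j (-1) y
    have hne1 : (∑ i, (Fin.insertNth (α := fun _ : Fin 4 => ℝ) j 1 y) i ^ 2) ≠ 0 := by rw [h1]; nlinarith
    have hne2 : (∑ i, (Fin.insertNth (α := fun _ : Fin 4 => ℝ) j (-1) y) i ^ 2) ≠ 0 := by rw [h2]; nlinarith
    rw [pd_invNormSq j _ hne1, pd_invNormSq j _ hne2, h1, h2,
      Fin.insertNth_apply_same, Fin.insertNth_apply_same]
    have hpos : (0:ℝ) < 1 + ∑ i, y i ^ 2 := one_add_S_pos y
    norm_num
    field_simp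
    ring
  calc ∑ j : Fin 4,
      (∫ y in Set.Icc (fun _ : Fin 3 => (-1 : ℝ)) (fun _ => 1),
        (pd j invNormSq (j.insertNth 1 y) - pd j invNormSq (j.insertNth (-1) y)))
      = ∑ j : Fin 4, ∫ y in Box, (-4) * ((1 + ∑ i, y i ^ 2) ^ 2)⁻¹ :=
        Finset.sum_congr rfl (fun j _ =>
          integral_congr_ae (Filter.Eventually.of_forall (fun y => hpt j y)))
    _ = ∑ _j : Fin 4, ((-4) * (π ^ 2 / 4)) := by
        rw [MeasureTheory.integral_const_mul, cube_integral]
    _ = -4 * Real.pi ^ 2 := by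
        simp
        ring
end
end

section
/- With σ₁ and σ₄ the explicit integrals defined below, one has 8·(3σ₁ + σ₄) = π²; equivalently, ∫_{[−1,1]³} (1 + 3y₁⁴)/(1+|y|²)⁴ dy = π²/8. -/
open scoped BigOperators
open MeasureTheory

noncomputable section

/-- `σ₁ = ∫_{[−1,1]³} y₁⁴/(1+|y|²)⁴ dy`. -/
def sigma1 : ℝ :=
  ∫ y in Set.Icc (fun _ : Fin 3 => (-1 : ℝ)) (fun _ => 1),
    (y 0) ^ 4 / (1 + ∑ i, (y i) ^ 2) ^ 4

/-- `σ₂ = ∫_{[−1,1]³} y₁²y₂²/(1+|y|²)⁴ dy`. -/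
def sigma2 : ℝ :=
  ∫ y in Set.Icc (fun _ : Fin 3 => (-1 : ℝ)) (fun _ => 1),
    (y 0) ^ 2 * (y 1) ^ 2 / (1 + ∑ i, (y i) ^ 2) ^ 4

/-- `σ₃ = ∫_{[−1,1]³} y₁²/(1+|y|²)⁴ dy`. -/
def sigma3 : ℝ :=
  ∫ y in Set.Icc (fun _ : Fin 3 => (-1 : ℝ)) (fun _ => 1),
    (y 0) ^ 2 / (1 + ∑ i, (y i) ^ 2) ^ 4

/-- `σ₄ = ∫_{[−1,1]³} 1/(1+|y|²)⁴ dy`. -/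
def sigma4 : ℝ :=
  ∫ y in Set.Icc (fun _ : Fin 3 => (-1 : ℝ)) (fun _ => 1),
    1 / (1 + ∑ i, (y i) ^ 2) ^ 4

set_option maxHeartbeats 1000000

section Aux
open Set Real Filter Topology

noncomputable def Efun (u : ℝ) : ℝ := ∫ s in (0:ℝ)..u, Real.exp (-s^2)
noncomputable def E4fun (u : ℝ) : ℝ := ∫ s in (0:ℝ)..u, s^4 * Real.exp (-s^2)
noncomputable def phi (u : ℝ) : ℝ :=
  (8/3*u^4*(Efun u)^3 + 8*E4fun u*(Efun u)^2) * Real.exp (-u^2)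
noncomputable def Gfun (u : ℝ) : ℝ :=
  2*(Efun u)^4 - (4/3*u^3 + 2*u)*Real.exp (-u^2)*(Efun u)^3
abbrev Cube : Set (Fin 3 → ℝ) := Set.Icc (fun _ => (-1:ℝ)) (fun _ => 1)
noncomputable def Sq (y : Fin 3 → ℝ) : ℝ := ∑ i, (y i)^2
noncomputable def Ffun (y : Fin 3 → ℝ) (t : ℝ) : ℝ :=
  (1+3*(y 0)^4) * (t^3 * Real.exp (-((1+Sq y)*t)))
noncomputable def Bf (t : ℝ) : ℝ := ∫ x in Icc (-1:ℝ) 1, Real.exp (-(t*x^2))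
noncomputable def Af (t : ℝ) : ℝ := ∫ x in Icc (-1:ℝ) 1, x^4 * Real.exp (-(t*x^2))
noncomputable def Hf (t : ℝ) : ℝ := t^3 * Real.exp (-t) * ((Bf t)^3 + 3 * Af t * (Bf t)^2)

lemma hasDerivAt_Efun (u : ℝ) : HasDerivAt Efun (Real.exp (-u^2)) u := by
  have hc : Continuous fun s : ℝ => Real.exp (-s^2) := by continuity
  exact (hc.integral_hasStrictDerivAt 0 u).hasDerivAt

lemma E4_closed (u : ℝ) :
    E4fun u = 3/4 * Efun u - (u^3/2 + 3*u/4) * Real.exp (-u^2) := by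
  have key : ∀ x : ℝ, HasDerivAt (fun s => 3/4 * Efun s - (s^3/2 + 3*s/4) * Real.exp (-s^2))
      (x^4 * Real.exp (-x^2)) x := by
    intro x
    have h1 : HasDerivAt (fun s : ℝ => -s^2) (-(2*x)) x := by
      simpa using ((hasDerivAt_pow 2 x).fun_neg)
    have h2 : HasDerivAt (fun s : ℝ => Real.exp (-s^2)) (Real.exp (-x^2) * (-(2*x))) x :=
      (Real.hasDerivAt_exp _).comp x h1
    have h3 : HasDerivAt (fun s : ℝ => s^3/2 + 3*s/4) (3*x^2/2 + 3/4) x := by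
      have := ((hasDerivAt_pow 3 x).div_const 2).fun_add
        (((hasDerivAt_id x).const_mul 3).div_const 4)
      refine this.congr_deriv ?_
      ring
    have h4 := (h3.fun_mul h2)
    have h5 := ((hasDerivAt_Efun x).const_mul (3/4)).fun_sub h4
    refine h5.congr_deriv ?_
    ring
  have hint : IntervalIntegrable (fun s : ℝ => s^4 * Real.exp (-s^2)) volume 0 u := by
    apply Continuous.intervalIntegrable; continuity
  have := intervalIntegral.integral_eq_sub_of_hasDerivAt
    (f := fun s => 3/4 * Efun s - (s^3/2 + 3*s/4) * Real.exp (-s^2))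
    (fun x _ => key x) hint
  rw [E4fun, this]
  simp [Efun]

lemma Efun_nonneg {u : ℝ} (hu : 0 ≤ u) : 0 ≤ Efun u := by
  apply intervalIntegral.integral_nonneg hu
  intro x _; positivity

lemma E4fun_nonneg {u : ℝ} (hu : 0 ≤ u) : 0 ≤ E4fun u := by
  apply intervalIntegral.integral_nonneg hu
  intro x _; positivity

lemma Efun_tendsto : Tendsto Efun atTop (𝓝 (Real.sqrt π / 2)) := by
  have hi : IntegrableOn (fun s : ℝ => Real.exp (-s^2)) (Ioi 0) := by
    have := integrableOn_rpow_mul_exp_neg_mul_sq (b := 1) one_pos (s := 0) (by norm_num)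
    simpa using this
  have h := intervalIntegral_tendsto_integral_Ioi 0 hi tendsto_id
  have hval : ∫ s in Ioi (0:ℝ), Real.exp (-s^2) = Real.sqrt π / 2 := by
    have := integral_gaussian_Ioi 1
    simpa using this
  rw [hval] at h
  exact h

lemma poly_exp_tendsto (k : ℕ) :
    Tendsto (fun u : ℝ => u^k * Real.exp (-u^2)) atTop (𝓝 0) := by
  have h1 : Tendsto (fun u : ℝ => u^2) atTop atTop := tendsto_pow_atTop (by norm_num)
  have h3 : Tendsto (fun u : ℝ => (u^2)^k * Real.exp (-u^2)) atTop (𝓝 0) :=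
    (tendsto_pow_mul_exp_neg_atTop_nhds_zero k).comp h1
  apply squeeze_zero' ?_ ?_ h3
  · filter_upwards [eventually_ge_atTop (0:ℝ)] with u hu
    positivity
  · filter_upwards [eventually_ge_atTop (1:ℝ)] with u hu
    have : u^k ≤ (u^2)^k := by
      apply pow_le_pow_left₀ (by linarith) (by nlinarith)
    exact mul_le_mul_of_nonneg_right this (Real.exp_nonneg _)

lemma hasDerivAt_Gfun (u : ℝ) : HasDerivAt Gfun (phi u) u := by
  have hE := hasDerivAt_Efun u
  have h1 : HasDerivAt (fun s : ℝ => -s^2) (-(2*u)) u := by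
    simpa using ((hasDerivAt_pow 2 u).fun_neg)
  have hexp : HasDerivAt (fun s : ℝ => Real.exp (-s^2)) (Real.exp (-u^2) * (-(2*u))) u :=
    (Real.hasDerivAt_exp _).comp u h1
  have hq : HasDerivAt (fun s : ℝ => 4/3*s^3 + 2*s) (4*u^2 + 2) u := by
    have := (((hasDerivAt_pow 3 u).const_mul (4/3)).fun_add (((hasDerivAt_id u).const_mul 2)))
    refine this.congr_deriv ?_
    ring
  have hE3 : HasDerivAt (fun s => (Efun s)^3) (3 * (Efun u)^2 * Real.exp (-u^2)) u := by
    have := hE.fun_pow 3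
    refine this.congr_deriv ?_
    norm_num
  have hE4 : HasDerivAt (fun s => (Efun s)^4) (4 * (Efun u)^3 * Real.exp (-u^2)) u := by
    have := hE.fun_pow 4
    refine this.congr_deriv ?_
    norm_num
  have hGG := (hE4.const_mul 2).fun_sub (((hq.fun_mul hexp)).fun_mul hE3)
  refine hGG.congr_deriv ?_
  rw [phi, E4_closed]
  ring

lemma Efun_zero : Efun 0 = 0 := intervalIntegral.integral_same

lemma Gfun_tendsto : Tendsto Gfun atTop (𝓝 (π^2/8)) := by
  have hE := Efun_tendsto
  have h1 : Tendsto (fun u => 2*(Efun u)^4) atTop (𝓝 (2*(Real.sqrt π / 2)^4)) :=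
    ((hE.pow 4).const_mul 2)
  have h2 : Tendsto (fun u : ℝ => (4/3*u^3 + 2*u)*Real.exp (-u^2)) atTop (𝓝 0) := by
    have := ((poly_exp_tendsto 3).const_mul (4/3)).add ((poly_exp_tendsto 1).const_mul 2)
    simp only [mul_zero, add_zero] at this
    apply this.congr
    intro u; ring
  have h3 : Tendsto (fun u => (4/3*u^3 + 2*u)*Real.exp (-u^2)*(Efun u)^3) atTop
      (𝓝 (0 * (Real.sqrt π / 2)^3)) := h2.mul (hE.pow 3)
  have h4 := h1.sub h3
  have : 2*(Real.sqrt π / 2)^4 - 0 * (Real.sqrt π / 2)^3 = π^2/8 := by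
    have hsq : Real.sqrt π ^ 2 = π := Real.sq_sqrt Real.pi_nonneg
    have : (Real.sqrt π)^4 = π^2 := by rw [show 4 = 2*2 from rfl, pow_mul, hsq]
    rw [div_pow, this]
    ring
  rw [this] at h4
  exact h4

lemma phi_integral : ∫ u in Ioi (0:ℝ), phi u = π^2/8 := by
  have h := integral_Ioi_of_hasDerivAt_of_nonneg' (a := 0) (g := Gfun) (g' := phi)
    (fun x _ => hasDerivAt_Gfun x) ?_ Gfun_tendsto
  · rw [h, Gfun, Efun_zero]
    ring
  · intro x hx
    have hx' : (0:ℝ) ≤ x := le_of_lt hx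
    rw [phi]
    have := Efun_nonneg hx'
    have := E4fun_nonneg hx'
    positivity

lemma laplace {c : ℝ} (hc : 0 < c) :
    ∫ t in Ioi (0:ℝ), t^3 * Real.exp (-(c*t)) = 6 / c^4 := by
  have h := Real.integral_rpow_mul_exp_neg_mul_Ioi (a := 4) (r := c) (by norm_num) hc
  have e1 : ∀ t : ℝ, t ^ ((4:ℝ) - 1) = t ^ (3:ℕ) := by
    intro t
    rw [show (4:ℝ) - 1 = ((3:ℕ):ℝ) by norm_num, Real.rpow_natCast]
  simp only [e1] at h
  rw [h, show (4:ℝ) = ((4:ℕ):ℝ) by norm_num, Real.rpow_natCast,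
    show ((4:ℕ):ℝ) = ((3:ℕ):ℝ)+1 by norm_num, Real.Gamma_nat_eq_factorial]
  simp [Nat.factorial]
  ring

lemma laplace_integrable {c : ℝ} (hc : 0 < c) :
    IntegrableOn (fun t => t^3 * Real.exp (-(c*t))) (Ioi (0:ℝ)) := by
  have h := integrableOn_rpow_mul_exp_neg_mul_rpow (p := 1) (s := 3) (b := c)
    (by norm_num) one_pos hc
  apply h.congr_fun ?_ measurableSet_Ioi
  intro x hx
  simp only [Real.rpow_one]
  rw [show (3:ℝ) = ((3:ℕ):ℝ) by norm_num, Real.rpow_natCast]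
  ring_nf

lemma even_part {f : ℝ → ℝ} (hf : ∀ x, f (-x) = f x)
    (hi : Continuous f) (u : ℝ) :
    ∫ x in (-u)..u, f x = 2 * ∫ x in (0:ℝ)..u, f x := by
  have h1 : ∫ x in (-u)..(0:ℝ), f x = ∫ x in (0:ℝ)..u, f x := by
    have h0 := intervalIntegral.integral_comp_neg (a := (0:ℝ)) (b := u) f
    simp only [neg_zero, hf] at h0
    exact h0.symm
  rw [← intervalIntegral.integral_add_adjacent_intervals
    (a := -u) (b := 0) (c := u) (hi.intervalIntegrable _ _) (hi.intervalIntegrable _ _), h1]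
  ring

lemma innerB {u : ℝ} (hu : 0 < u) :
    ∫ x in Icc (-1:ℝ) 1, Real.exp (-(u^2 * x^2)) = 2 * Efun u / u := by
  rw [integral_Icc_eq_integral_Ioc, ← intervalIntegral.integral_of_le (by norm_num : (-1:ℝ) ≤ 1)]
  have h1 : ∀ x : ℝ, Real.exp (-(u^2 * x^2)) = (fun s => Real.exp (-s^2)) (u * x) := by
    intro x; simp only; ring_nf
  simp_rw [h1]
  have h2 := intervalIntegral.integral_comp_mul_left (a := (-1:ℝ)) (b := 1)
    (fun s => Real.exp (-s^2)) (ne_of_gt hu)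
  rw [h2, mul_neg_one, mul_one]
  rw [even_part (by intro x; ring_nf) (by continuity) u]
  rw [smul_eq_mul, ← Efun]
  field_simp

lemma innerA {u : ℝ} (hu : 0 < u) :
    ∫ x in Icc (-1:ℝ) 1, x^4 * Real.exp (-(u^2 * x^2)) = 2 * E4fun u / u^5 := by
  rw [integral_Icc_eq_integral_Ioc, ← intervalIntegral.integral_of_le (by norm_num : (-1:ℝ) ≤ 1)]
  have h1 : ∀ x : ℝ, x^4 * Real.exp (-(u^2 * x^2)) =
      u⁻¹^4 * ((fun s => s^4 * Real.exp (-s^2)) (u * x)) := by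
    intro x
    simp only
    rw [mul_pow]
    have : u⁻¹^4 * (u^4 * x^4) = x^4 := by field_simp
    rw [show u⁻¹ ^ 4 * (u ^ 4 * x ^ 4 * Real.exp (-(u * x) ^ 2)) =
      (u⁻¹^4 * (u^4 * x^4)) * Real.exp (-(u * x) ^ 2) by ring, this]
    ring_nf
  simp_rw [h1]
  rw [intervalIntegral.integral_const_mul]
  have h2 := intervalIntegral.integral_comp_mul_left (a := (-1:ℝ)) (b := 1)
    (fun s => s^4 * Real.exp (-s^2)) (ne_of_gt hu)
  rw [h2, mul_neg_one, mul_one]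
  rw [even_part (by intro x; ring_nf) (by continuity) u]
  rw [smul_eq_mul, ← E4fun]
  rw [div_eq_mul_inv, ← inv_pow]
  ring

lemma cube_eq_pi : Cube = Set.univ.pi (fun _ : Fin 3 => Icc (-1:ℝ) 1) := by
  rw [Set.pi_univ_Icc]

lemma measurableSet_cube : MeasurableSet Cube := measurableSet_Icc

lemma box_prod (G : Fin 3 → ℝ → ℝ) :
    ∫ y in Cube, ∏ i, G i (y i) = ∏ i, ∫ x in Icc (-1:ℝ) 1, G i x := by
  have key : ∀ y : Fin 3 → ℝ,
      Cube.indicator (fun y => ∏ i, G i (y i)) y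
        = ∏ i, (Icc (-1:ℝ) 1).indicator (G i) (y i) := by
    intro y
    by_cases hy : y ∈ Cube
    · rw [Set.indicator_of_mem hy]
      rw [cube_eq_pi] at hy
      refine Finset.prod_congr rfl fun i _ => ?_
      rw [Set.indicator_of_mem (hy i (Set.mem_univ i))]
    · rw [Set.indicator_of_notMem hy]
      rw [cube_eq_pi] at hy
      simp only [Set.mem_pi, Set.mem_univ, forall_true_left] at hy
      push_neg at hy
      obtain ⟨i, hi⟩ := hy
      refine (Finset.prod_eq_zero (Finset.mem_univ i) ?_).symm
      rw [Set.indicator_of_notMem hi]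
  rw [← integral_indicator measurableSet_cube]
  simp_rw [key]
  rw [MeasureTheory.integral_fintype_prod_volume_eq_prod (𝕜 := ℝ)
    (f := fun (i : Fin 3) x => (Icc (-1:ℝ) 1).indicator (G i) x)]
  refine Finset.prod_congr rfl fun i _ => ?_
  rw [integral_indicator measurableSet_Icc]

lemma Sq_nonneg (y : Fin 3 → ℝ) : 0 ≤ Sq y :=
  Finset.sum_nonneg fun i _ => sq_nonneg _

lemma Sq_cont : Continuous Sq := by
  apply continuous_finset_sum
  intro i _
  exact (continuous_apply i).pow 2

lemma one_add_Sq_pos (y : Fin 3 → ℝ) : 0 < 1 + Sq y := by linarith [Sq_nonneg y]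

lemma denom_ne (y : Fin 3 → ℝ) : (1 + Sq y)^4 ≠ 0 := by
  have := one_add_Sq_pos y
  positivity

lemma stepI (y : Fin 3 → ℝ) :
    (1+3*(y 0)^4) / (1 + Sq y)^4 = (1/6) * ∫ t in Ioi (0:ℝ), Ffun y t := by
  unfold Ffun
  rw [MeasureTheory.integral_const_mul, laplace (one_add_Sq_pos y)]
  have := one_add_Sq_pos y
  field_simp

lemma F_integrable : Integrable (fun p : (Fin 3 → ℝ) × ℝ => Ffun p.1 p.2)
    ((volume.restrict Cube).prod (volume.restrict (Ioi 0))) := by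
  have hFcont : Continuous (fun p : (Fin 3 → ℝ) × ℝ => Ffun p.1 p.2) := by
    unfold Ffun Sq
    fun_prop
  rw [integrable_prod_iff hFcont.aestronglyMeasurable]
  constructor
  · apply ae_of_all
    intro y
    have h := (laplace_integrable (one_add_Sq_pos y)).const_mul (1+3*(y 0)^4)
    simpa [Ffun] using h
  · have hnorm : ∀ y : Fin 3 → ℝ, (∫ t, ‖Ffun y t‖ ∂(volume.restrict (Ioi 0)))
        = (1+3*(y 0)^4) * (6/(1+Sq y)^4) := by
      intro y
      have h1 : ∀ t ∈ Ioi (0:ℝ), ‖Ffun y t‖ = Ffun y t := by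
        intro t ht
        rw [Real.norm_eq_abs, abs_of_nonneg]
        unfold Ffun
        have h0 : (0:ℝ) ≤ 1+3*(y 0)^4 := by positivity
        have h1 : (0:ℝ) ≤ t^3 := le_of_lt (pow_pos ht 3)
        positivity
      rw [setIntegral_congr_fun measurableSet_Ioi h1]
      unfold Ffun
      rw [MeasureTheory.integral_const_mul, laplace (one_add_Sq_pos y)]
    have hcont2 : Continuous (fun y : Fin 3 → ℝ => (1+3*(y 0)^4) * (6/(1+Sq y)^4)) := by
      apply Continuous.mul
      · fun_prop
      · apply Continuous.div continuous_const ((continuous_const.add Sq_cont).pow 4)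
        intro y
        exact denom_ne y
    have : IntegrableOn (fun y : Fin 3 → ℝ => (1+3*(y 0)^4) * (6/(1+Sq y)^4)) Cube :=
      hcont2.integrableOn_Icc
    exact this.congr (ae_of_all _ fun y => (hnorm y).symm)

lemma exp_prod (t : ℝ) (y : Fin 3 → ℝ) :
    Real.exp (-((1+Sq y)*t)) = Real.exp (-t) * ∏ i, Real.exp (-(t*(y i)^2)) := by
  rw [← Real.exp_sum, ← Real.exp_add]
  congr 1
  have : ∑ i, -(t*(y i)^2) = -(t * Sq y) := by
    rw [Sq, Finset.mul_sum, ← Finset.sum_neg_distrib]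
  rw [this]
  ring

lemma stepIII {t : ℝ} (ht : t ∈ Ioi (0:ℝ)) : ∫ y in Cube, Ffun y t = Hf t := by
  set g : ℝ → ℝ := fun x => Real.exp (-(t*x^2)) with hg
  set G2 : Fin 3 → ℝ → ℝ := ![fun x => x^4 * Real.exp (-(t*x^2)), g, g] with hG2
  have hpt : ∀ y : Fin 3 → ℝ, Ffun y t
      = t^3 * Real.exp (-t) * ((∏ i, g (y i)) + 3 * ∏ i, G2 i (y i)) := by
    intro y
    rw [Ffun, exp_prod]
    simp only [Fin.prod_univ_three, hG2, hg, Matrix.cons_val_zero, Matrix.cons_val_one,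
      Matrix.head_cons, Matrix.cons_val_two, Matrix.tail_cons]
    ring
  rw [integral_congr_ae (ae_of_all _ hpt), MeasureTheory.integral_const_mul]
  have hgc : Continuous g := by fun_prop
  have hint1 : IntegrableOn (fun y : Fin 3 → ℝ => ∏ i, g (y i)) Cube := by
    apply Continuous.integrableOn_Icc
    continuity
  have hint2 : IntegrableOn (fun y : Fin 3 → ℝ => ∏ i, G2 i (y i)) Cube := by
    apply Continuous.integrableOn_Icc
    have e : (fun y : Fin 3 → ℝ => ∏ i, G2 i (y i))
        = fun y => ((y 0)^4 * Real.exp (-(t*(y 0)^2))) *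
          (Real.exp (-(t*(y 1)^2)) * Real.exp (-(t*(y 2)^2))) := by
      funext y
      simp only [Fin.prod_univ_three, hG2, hg, Matrix.cons_val_zero, Matrix.cons_val_one,
        Matrix.head_cons, Matrix.cons_val_two, Matrix.tail_cons]
      ring
    rw [e]
    fun_prop
  rw [integral_add hint1 (hint2.const_mul 3), MeasureTheory.integral_const_mul]
  rw [box_prod (fun _ => g), box_prod G2]
  simp only [Fin.prod_univ_three, hG2, Matrix.cons_val_zero, Matrix.cons_val_one,
    Matrix.head_cons, Matrix.cons_val_two, Matrix.tail_cons]
  rw [Hf, Bf, Af, hg]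
  ring

lemma main_W : ∫ y in Cube, (1+3*(y 0)^4) / (1 + Sq y)^4 = π^2/8 := by
  rw [integral_congr_ae (ae_of_all _ stepI), MeasureTheory.integral_const_mul]
  rw [MeasureTheory.integral_integral_swap F_integrable]
  rw [setIntegral_congr_fun measurableSet_Ioi (fun t ht => stepIII ht)]
  have hsub := integral_comp_rpow_Ioi (fun t => Hf t) (p := 2) two_ne_zero
  rw [← hsub]
  have hcong : ∀ x ∈ Ioi (0:ℝ), (|(2:ℝ)| * x ^ ((2:ℝ)-1)) • Hf (x ^ (2:ℝ)) = 6 * phi x := by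
    intro x hx
    have hx0 : (0:ℝ) < x := hx
    have h2 : x ^ ((2:ℝ)-1) = x := by norm_num
    have h3 : x ^ ((2:ℝ)) = x^2 := by
      rw [show (2:ℝ) = ((2:ℕ):ℝ) by norm_num, Real.rpow_natCast]
    rw [h2, h3, smul_eq_mul, Hf]
    simp only [Bf, Af]
    rw [innerB hx0, innerA hx0, phi]
    rw [show |(2:ℝ)| = 2 from abs_of_pos two_pos]
    field_simp
    ring
  rw [setIntegral_congr_fun measurableSet_Ioi hcong, MeasureTheory.integral_const_mul,
    phi_integral]
  ring

end Aux

/-- `8(3σ₁ + σ₄) = π²`; equivalently `∫_{[−1,1]³} (1+3y₁⁴)/(1+|y|²)⁴ dy = π²/8`. -/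
theorem sigma_one_four_eq :
    8 * (3 * sigma1 + sigma4) = Real.pi ^ 2 ∧
    (∫ y in Set.Icc (fun _ : Fin 3 => (-1 : ℝ)) (fun _ => 1),
        (1 + 3 * (y 0) ^ 4) / (1 + ∑ i, (y i) ^ 2) ^ 4) = Real.pi ^ 2 / 8 := by

  have hW : (∫ y in Set.Icc (fun _ : Fin 3 => (-1 : ℝ)) (fun _ => 1),
      (1 + 3 * (y 0) ^ 4) / (1 + ∑ i, (y i) ^ 2) ^ 4) = Real.pi ^ 2 / 8 := by
    have h := main_W
    simp only [Sq] at h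
    exact h
  refine ⟨?_, hW⟩
  have h1 : IntegrableOn (fun y : Fin 3 → ℝ => 1 / (1 + Sq y)^4) Cube := by
    apply Continuous.integrableOn_Icc
    exact Continuous.div continuous_const ((continuous_const.add Sq_cont).pow 4) denom_ne
  have h2 : IntegrableOn (fun y : Fin 3 → ℝ => (y 0)^4 / (1 + Sq y)^4) Cube := by
    apply Continuous.integrableOn_Icc
    exact Continuous.div (by fun_prop) ((continuous_const.add Sq_cont).pow 4) denom_ne
  have hsplit : (∫ y in Cube, (1 + 3 * (y 0)^4) / (1 + Sq y)^4)
      = (∫ y in Cube, (y 0)^4 / (1 + Sq y)^4) * 3 + ∫ y in Cube, 1 / (1 + Sq y)^4 := by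
    have e : ∀ y : Fin 3 → ℝ, (1 + 3 * (y 0)^4) / (1 + Sq y)^4
        = (y 0)^4 / (1 + Sq y)^4 * 3 + 1 / (1 + Sq y)^4 := by
      intro y; ring
    rw [integral_congr_ae (ae_of_all _ e), integral_add (h2.mul_const 3) h1,
      integral_mul_const]
  have hs1 : sigma1 = ∫ y in Cube, (y 0)^4 / (1 + Sq y)^4 := by
    rw [sigma1]; simp only [Sq]
  have hs4 : sigma4 = ∫ y in Cube, 1 / (1 + Sq y)^4 := by
    rw [sigma4]; simp only [Sq]
  have hWc : (∫ y in Cube, (1 + 3 * (y 0)^4) / (1 + Sq y)^4) = Real.pi^2/8 := by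
    have h := main_W
    exact h
  rw [hsplit, ← hs1, ← hs4] at hWc
  linarith
end
end

section
/- With σ₁, σ₂, σ₃, σ₄ the explicit integrals defined below, one has 3σ₁ − 6σ₂ − 6σ₃ + σ₄ = 0. -/
open scoped BigOperators
open MeasureTheory

noncomputable section

namespace SigmaAux

abbrev box3 : Set (Fin 3 → ℝ) := Set.Icc (fun _ : Fin 3 => (-1 : ℝ)) (fun _ => 1)

/-! ### Permutation invariance of integrals over the cube -/

lemma perm_preimage (π : Equiv.Perm (Fin 3)) :
    (MeasurableEquiv.piCongrLeft (fun _ => ℝ) π) ⁻¹' box3 = box3 := by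
  ext y
  have h : ∀ j, (MeasurableEquiv.piCongrLeft (fun _ => ℝ) π) y j = y (π.symm j) := by
    intro j
    conv_lhs => rw [show j = π (π.symm j) by simp]
    exact Equiv.piCongrLeft_apply_apply (fun _ => ℝ) π y (π.symm j)
  simp only [Set.mem_preimage, Set.mem_Icc, Pi.le_def, box3]
  constructor
  · rintro ⟨h1, h2⟩
    refine ⟨fun i => ?_, fun i => ?_⟩
    · simpa [h] using h1 (π i)
    · simpa [h] using h2 (π i)
  · rintro ⟨h1, h2⟩
    exact ⟨fun j => by simpa [h] using h1 (π.symm j), fun j => by simpa [h] using h2 (π.symm j)⟩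

lemma integral_perm (π : Equiv.Perm (Fin 3)) (g : (Fin 3 → ℝ) → ℝ) :
    ∫ y in box3, g (fun i => y (π i)) = ∫ y in box3, g y := by
  have hmp := MeasureTheory.volume_measurePreserving_piCongrLeft (fun _ : Fin 3 => ℝ) π.symm
  have hemb := (MeasurableEquiv.piCongrLeft (fun _ : Fin 3 => ℝ) π.symm).measurableEmbedding
  have key := hmp.setIntegral_preimage_emb hemb g box3
  rw [perm_preimage] at key
  rw [← key]
  apply setIntegral_congr_fun measurableSet_Icc
  intro y _
  dsimp only
  congr 1
  funext i
  conv_rhs => rw [show i = π.symm (π i) by simp]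
  exact (Equiv.piCongrLeft_apply_apply (fun _ => ℝ) π.symm y (π i)).symm

/-! ### The vector field and its divergence -/

def S3 (x : Fin 3 → ℝ) : ℝ := ∑ i, (x i) ^ 2

lemma S3_nonneg (x : Fin 3 → ℝ) : 0 ≤ S3 x :=
  Finset.sum_nonneg fun _ _ => sq_nonneg _

lemma denom_pos (x : Fin 3 → ℝ) : 0 < 1 + S3 x := by nlinarith [S3_nonneg x]

def pr (i : Fin 3) : (Fin 3 → ℝ) →L[ℝ] ℝ := ContinuousLinearMap.proj i

def F (i : Fin 3) (x : Fin 3 → ℝ) : ℝ := x i * (1 - (x i) ^ 2) * ((1 + S3 x) ^ 3)⁻¹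

def F' (i : Fin 3) (x : Fin 3 → ℝ) : (Fin 3 → ℝ) →L[ℝ] ℝ :=
  ((1 - 3 * x i ^ 2) / (1 + S3 x) ^ 3) • pr i
    + (-6 * (x i * (1 - x i ^ 2)) / (1 + S3 x) ^ 4) • (∑ j, (x j) • pr j)

lemma hasFDerivAt_S3 (x : Fin 3 → ℝ) :
    HasFDerivAt S3 (∑ j, ((((2:ℕ)) * x j ^ (2-1)) • pr j)) x := by
  apply HasFDerivAt.fun_sum
  intro j _
  exact (hasDerivAt_pow 2 (x j)).comp_hasFDerivAt x (ContinuousLinearMap.hasFDerivAt (pr j))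

lemma hasFDerivAt_F (i : Fin 3) (x : Fin 3 → ℝ) : HasFDerivAt (F i) (F' i x) x := by
  have hd := denom_pos x
  have hxi : HasFDerivAt (fun x : Fin 3 → ℝ => x i) (pr i) x :=
    ContinuousLinearMap.hasFDerivAt (pr i)
  have hw : HasDerivAt (fun t : ℝ => ((1 + t) ^ 3)⁻¹)
      (-((3:ℕ) * (1 + S3 x) ^ (3-1) * 1) / ((1 + S3 x) ^ 3) ^ 2) (S3 x) :=
    (((hasDerivAt_id (S3 x)).const_add 1).pow 3).inv (pow_pos hd 3).ne'
  have H := (hxi.mul ((hasFDerivAt_const (1:ℝ) x).sub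
      ((hasDerivAt_pow 2 (x i)).comp_hasFDerivAt x hxi))).mul
    (hw.comp_hasFDerivAt x (hasFDerivAt_S3 x))
  apply H.congr_fderiv
  apply ContinuousLinearMap.ext
  intro v
  have h0 : ((1 + S3 x) ^ 3) ≠ 0 := by positivity
  have h4 : ((1 + S3 x) ^ 4) ≠ 0 := by positivity
  simp only [F', pr, ContinuousLinearMap.add_apply, ContinuousLinearMap.smul_apply,
    ContinuousLinearMap.sub_apply, ContinuousLinearMap.zero_apply, ContinuousLinearMap.coe_sum',
    Finset.sum_apply, smul_eq_mul, Nat.cast_ofNat, pow_one, ContinuousLinearMap.proj_apply,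
    Fin.sum_univ_three, Pi.mul_apply, Pi.sub_apply, Function.comp_apply]
  field_simp
  ring

lemma continuous_S3 : Continuous S3 :=
  continuous_finset_sum _ fun i _ => (continuous_apply i).pow 2

lemma continuous_inv_denom (n : ℕ) : Continuous fun x : Fin 3 → ℝ => ((1 + S3 x) ^ n)⁻¹ := by
  apply Continuous.inv₀ ((continuous_const.add continuous_S3).pow n)
  intro x
  have := denom_pos x
  exact (pow_pos this n).ne'

lemma continuous_F (i : Fin 3) : Continuous (F i) :=
  ((continuous_apply i).mul
    (continuous_const.sub ((continuous_apply i).pow 2))).mul (continuous_inv_denom 3)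

lemma F'_single (i : Fin 3) (x : Fin 3 → ℝ) :
    F' i x (Pi.single i 1) =
      (1 - 3 * x i ^ 2) / (1 + S3 x) ^ 3
        + -6 * (x i * (1 - x i ^ 2)) / (1 + S3 x) ^ 4 * x i := by
  simp only [F', ContinuousLinearMap.add_apply, ContinuousLinearMap.smul_apply,
    ContinuousLinearMap.coe_sum', Finset.sum_apply, smul_eq_mul, pr,
    ContinuousLinearMap.proj_apply, Pi.single_apply, mul_ite, mul_one, mul_zero,
    Finset.sum_ite_eq', Finset.mem_univ, if_true]

/-- The divergence of `F` as an explicit rational function. -/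
lemma divergence_eq (x : Fin 3 → ℝ) :
    ∑ i, F' i x (Pi.single i 1) =
      (3 * (x 0 ^ 4 + x 1 ^ 4 + x 2 ^ 4)
        - 6 * (x 0 ^ 2 * x 1 ^ 2 + x 0 ^ 2 * x 2 ^ 2 + x 1 ^ 2 * x 2 ^ 2)
        - 6 * (x 0 ^ 2 + x 1 ^ 2 + x 2 ^ 2) + 3) / (1 + S3 x) ^ 4 := by
  have hd := denom_pos x
  have h3 : ((1 + S3 x) ^ 3) ≠ 0 := by positivity
  have h4 : ((1 + S3 x) ^ 4) ≠ 0 := by positivity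
  have hs : S3 x = x 0 ^ 2 + x 1 ^ 2 + x 2 ^ 2 := by simp [S3, Fin.sum_univ_three]
  rw [Fin.sum_univ_three, F'_single, F'_single, F'_single]
  rw [hs] at *
  field_simp
  ring

/-- explicit divergence function -/
def dvg (x : Fin 3 → ℝ) : ℝ :=
  (3 * (x 0 ^ 4 + x 1 ^ 4 + x 2 ^ 4)
    - 6 * (x 0 ^ 2 * x 1 ^ 2 + x 0 ^ 2 * x 2 ^ 2 + x 1 ^ 2 * x 2 ^ 2)
    - 6 * (x 0 ^ 2 + x 1 ^ 2 + x 2 ^ 2) + 3) / (1 + S3 x) ^ 4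

lemma cont_div_denom {f : (Fin 3 → ℝ) → ℝ} (hf : Continuous f) :
    Continuous fun y => f y / (1 + S3 y) ^ 4 :=
  hf.div ((continuous_const.add continuous_S3).pow 4)
    (fun x => by have := denom_pos x; positivity)

lemma continuous_dvg : Continuous dvg := by
  apply cont_div_denom
  fun_prop

lemma intOn {g : (Fin 3 → ℝ) → ℝ} (hg : Continuous g) : IntegrableOn g box3 :=
  hg.continuousOn.integrableOn_compact isCompact_Icc

/-- The divergence theorem: the integral of the divergence vanishes. -/
lemma integral_dvg_zero : ∫ x in box3, dvg x = 0 := by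
  have hle : (fun _ : Fin 3 => (-1 : ℝ)) ≤ fun _ => 1 := fun i => by norm_num
  have H := MeasureTheory.integral_divergence_of_hasFDerivAt_off_countable'
      (fun _ : Fin 3 => (-1 : ℝ)) (fun _ => 1) hle F F' ∅ Set.countable_empty
      (fun i => (continuous_F i).continuousOn)
      (fun x _ i => hasFDerivAt_F i x)
      (by
        apply (intOn continuous_dvg).congr_fun _ measurableSet_Icc
        intro x _
        exact (divergence_eq x).symm)
  have hL : ∫ x in box3, dvg x
      = ∫ x in Set.Icc (fun _ : Fin 3 => (-1 : ℝ)) (fun _ => 1), ∑ i, F' i x (Pi.single i 1) := by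
    apply setIntegral_congr_fun measurableSet_Icc
    intro x _
    exact (divergence_eq x).symm
  rw [hL, H]
  apply Finset.sum_eq_zero
  intro i _
  have hfront : ∀ z : Fin 2 → ℝ, F i (i.insertNth ((fun _ : Fin 3 => (1:ℝ)) i) z) = 0 := by
    intro z
    simp [F, Fin.insertNth_apply_same]
  have hback : ∀ z : Fin 2 → ℝ, F i (i.insertNth ((fun _ : Fin 3 => (-1:ℝ)) i) z) = 0 := by
    intro z
    simp [F, Fin.insertNth_apply_same]
  rw [integral_congr_ae (Filter.Eventually.of_forall fun z => hfront z),
    integral_congr_ae (Filter.Eventually.of_forall fun z => hback z),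
    integral_zero, sub_self]

/-! ### Basic integrands -/

def g1 (i : Fin 3) (y : Fin 3 → ℝ) : ℝ := y i ^ 4 / (1 + S3 y) ^ 4
def g2 (i j : Fin 3) (y : Fin 3 → ℝ) : ℝ := y i ^ 2 * y j ^ 2 / (1 + S3 y) ^ 4
def g3 (i : Fin 3) (y : Fin 3 → ℝ) : ℝ := y i ^ 2 / (1 + S3 y) ^ 4
def g4 (y : Fin 3 → ℝ) : ℝ := 1 / (1 + S3 y) ^ 4

lemma int_g1 (i : Fin 3) : IntegrableOn (g1 i) box3 :=
  intOn (cont_div_denom (by fun_prop))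
lemma int_g2 (i j : Fin 3) : IntegrableOn (g2 i j) box3 :=
  intOn (cont_div_denom (by fun_prop))
lemma int_g3 (i : Fin 3) : IntegrableOn (g3 i) box3 :=
  intOn (cont_div_denom (by fun_prop))
lemma int_g4 : IntegrableOn g4 box3 :=
  intOn (cont_div_denom (by fun_prop))

lemma g1_eq (i : Fin 3) : ∫ y in box3, g1 i y = sigma1 := by
  have h := integral_perm (Equiv.swap 0 i) (g1 0)
  have hfe : (fun y : Fin 3 → ℝ => g1 0 (fun k => y (Equiv.swap 0 i k))) = g1 i := by
    funext y
    simp only [g1, S3, Equiv.swap_apply_left]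
    rw [show (∑ k, y (Equiv.swap 0 i k) ^ 2) = ∑ k, y k ^ 2 from
      Equiv.sum_comp (Equiv.swap 0 i) fun k => y k ^ 2]
  rw [hfe] at h
  rw [h]
  rfl

lemma g3_eq (i : Fin 3) : ∫ y in box3, g3 i y = sigma3 := by
  have h := integral_perm (Equiv.swap 0 i) (g3 0)
  have hfe : (fun y : Fin 3 → ℝ => g3 0 (fun k => y (Equiv.swap 0 i k))) = g3 i := by
    funext y
    simp only [g3, S3, Equiv.swap_apply_left]
    rw [show (∑ k, y (Equiv.swap 0 i k) ^ 2) = ∑ k, y k ^ 2 from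
      Equiv.sum_comp (Equiv.swap 0 i) fun k => y k ^ 2]
  rw [hfe] at h
  rw [h]
  rfl

lemma g2_eq (i j : Fin 3) (π : Equiv.Perm (Fin 3)) (h0 : π 0 = i) (h1 : π 1 = j) :
    ∫ y in box3, g2 i j y = sigma2 := by
  have h := integral_perm π (g2 0 1)
  have hfe : (fun y : Fin 3 → ℝ => g2 0 1 (fun k => y (π k))) = g2 i j := by
    funext y
    simp only [g2, S3, h0, h1]
    rw [show (∑ k, y (π k) ^ 2) = ∑ k, y k ^ 2 from
      Equiv.sum_comp π fun k => y k ^ 2]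
  rw [hfe] at h
  rw [h]
  rfl

lemma g4_eq : ∫ y in box3, g4 y = sigma4 := rfl

lemma combo : ∫ x in box3, dvg x
    = 9 * sigma1 - 18 * sigma2 - 18 * sigma3 + 3 * sigma4 := by
  have hfun : dvg = fun x =>
      ((((((((3 * g1 0 x + 3 * g1 1 x) + 3 * g1 2 x) - 6 * g2 0 1 x) - 6 * g2 0 2 x)
        - 6 * g2 1 2 x) - 6 * g3 0 x) - 6 * g3 1 x) - 6 * g3 2 x) + 3 * g4 x := by
    funext x
    simp only [dvg, g1, g2, g3, g4]
    ring
  have i10 := int_g1 0; have i11 := int_g1 1; have i12 := int_g1 2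
  have i201 := int_g2 0 1; have i202 := int_g2 0 2; have i212 := int_g2 1 2
  have i30 := int_g3 0; have i31 := int_g3 1; have i32 := int_g3 2
  have i4 := int_g4
  have B1 : IntegrableOn (fun x => 3 * g1 0 x) box3 := i10.const_mul 3
  have B2 : IntegrableOn (fun x => 3 * g1 0 x + 3 * g1 1 x) box3 := B1.add (i11.const_mul 3)
  have B3 : IntegrableOn (fun x => 3 * g1 0 x + 3 * g1 1 x + 3 * g1 2 x) box3 :=
    B2.add (i12.const_mul 3)
  have B4 : IntegrableOn
      (fun x => 3 * g1 0 x + 3 * g1 1 x + 3 * g1 2 x - 6 * g2 0 1 x) box3 :=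
    B3.sub (i201.const_mul 6)
  have B5 : IntegrableOn
      (fun x => 3 * g1 0 x + 3 * g1 1 x + 3 * g1 2 x - 6 * g2 0 1 x - 6 * g2 0 2 x) box3 :=
    B4.sub (i202.const_mul 6)
  have B6 : IntegrableOn
      (fun x => 3 * g1 0 x + 3 * g1 1 x + 3 * g1 2 x - 6 * g2 0 1 x - 6 * g2 0 2 x
        - 6 * g2 1 2 x) box3 :=
    B5.sub (i212.const_mul 6)
  have B7 : IntegrableOn
      (fun x => 3 * g1 0 x + 3 * g1 1 x + 3 * g1 2 x - 6 * g2 0 1 x - 6 * g2 0 2 x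
        - 6 * g2 1 2 x - 6 * g3 0 x) box3 :=
    B6.sub (i30.const_mul 6)
  have B8 : IntegrableOn
      (fun x => 3 * g1 0 x + 3 * g1 1 x + 3 * g1 2 x - 6 * g2 0 1 x - 6 * g2 0 2 x
        - 6 * g2 1 2 x - 6 * g3 0 x - 6 * g3 1 x) box3 :=
    B7.sub (i31.const_mul 6)
  have B9 : IntegrableOn
      (fun x => 3 * g1 0 x + 3 * g1 1 x + 3 * g1 2 x - 6 * g2 0 1 x - 6 * g2 0 2 x
        - 6 * g2 1 2 x - 6 * g3 0 x - 6 * g3 1 x - 6 * g3 2 x) box3 :=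
    B8.sub (i32.const_mul 6)
  rw [hfun, integral_add B9 (i4.const_mul 3), integral_sub B8 (i32.const_mul 6),
    integral_sub B7 (i31.const_mul 6), integral_sub B6 (i30.const_mul 6),
    integral_sub B5 (i212.const_mul 6), integral_sub B4 (i202.const_mul 6),
    integral_sub B3 (i201.const_mul 6), integral_add B2 (i12.const_mul 3),
    integral_add B1 (i11.const_mul 3)]
  simp only [MeasureTheory.integral_const_mul]
  rw [g1_eq 0, g1_eq 1, g1_eq 2, g2_eq 0 1 (Equiv.refl _) rfl rfl,
    g2_eq 0 2 (Equiv.swap 1 2) (by decide) (by decide),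
    g2_eq 1 2 (finRotate 3) (by decide) (by decide),
    g3_eq 0, g3_eq 1, g3_eq 2, g4_eq]
  ring

end SigmaAux

/-- `3σ₁ − 6σ₂ − 6σ₃ + σ₄ = 0`. -/
theorem sigma_alt_sum_eq : 3 * sigma1 - 6 * sigma2 - 6 * sigma3 + sigma4 = 0 := by
  have h := SigmaAux.combo
  rw [SigmaAux.integral_dvg_zero] at h
  linarith
end
end
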